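/- arXiv:math/9909173 — 2 statements merged into one kernel-verified Lean document; each statement's English description precedes it below -/
import Mathlib

section
/- Let A be a Banach algebra. If (I_α) is a decreasing net in Id(A) and I = ⋂_α I_α, then I_α → I in the topology τ_r. Likewise, if (I_α) is an increasing net in Id(A) and I is the closure of ⋃_α I_α, then I_α → I in τ_r. -/
open Topology Filter MeasureTheory Set

noncomputable section

universe u v




section IdealSpace

variable (A : Type u) [NonUnitalNormedRing A] [NormedSpace ℂ A]

/-- The space `Id(A)` of closed two-sided ideals of the Banach algebra `A`. -/
def IdSpace : Type u :=
  {S : Submodule ℂ A // IsClosed (S : Set A) ∧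
    (∀ a b : A, b ∈ S → a * b ∈ S) ∧ (∀ a b : A, a ∈ S → a * b ∈ S)}

instance : PartialOrder (IdSpace A) :=
  Subtype.partialOrder _

variable {A}

/-- The quotient norm `‖a + I‖` of `a` modulo the closed ideal `I`. -/
def qnorm (I : IdSpace A) (a : A) : ℝ := Metric.infDist a (I.1 : Set A)

variable (A)

/-- `τ_u`: the weakest topology on `Id(A)` for which all the norm functions
`I ↦ ‖a + I‖` are upper semicontinuous. -/
def tauU : TopologicalSpace (IdSpace A) :=
  TopologicalSpace.generateFrom {U | ∃ (a : A) (r : ℝ), U = {I : IdSpace A | qnorm I a < r}}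

variable {A}

/-- A net (given by a filter `F`) in `Id(A)` has the *normality property* with respect to
`I ∈ Id(A)` if `a ∉ I` implies `liminf ‖a + I_α‖ > 0`. -/
def NormalityProp (F : Filter (IdSpace A)) (I : IdSpace A) : Prop :=
  ∀ a : A, a ∉ I.1 →
    0 < Filter.liminf (fun J : IdSpace A => ENNReal.ofReal (qnorm J a)) F

variable (A)

/-- `τ_n`: the topology whose closed sets `N` have the property that if a net in `N` has the
normality property with respect to `I`, then `I ∈ N`. -/
def tauN : TopologicalSpace (IdSpace A) :=
  TopologicalSpace.generateFrom
    {U | ∀ (F : Filter (IdSpace A)), F.NeBot → F ≤ Filter.principal Uᶜ →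
      ∀ I : IdSpace A, NormalityProp F I → I ∈ Uᶜ}

/-- `τ_r`: the topology generated by `τ_u` and `τ_n`. -/
def tauR : TopologicalSpace (IdSpace A) := tauU A ⊓ tauN A

end IdealSpace




section Seminorms

variable (A : Type u) [NonUnitalNormedRing A] [NormedSpace ℂ A]

/-- An algebra seminorm on `A`: a (vector-space) seminorm which is submultiplicative. -/
structure AlgebraSeminorm extends Seminorm ℂ A where
  mul_le' : ∀ a b : A, toFun (a * b) ≤ toFun a * toFun b

variable {A}

/-- `S_k(A)`: the seminorms `ρ` on `A` with `ρ(a) ≤ k‖a‖` for all `a`. -/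
def Sk (k : ℕ) : Type u :=
  {ρ : AlgebraSeminorm A // ∀ a : A, ρ.toSeminorm a ≤ k * ‖a‖}

instance (k : ℕ) : TopologicalSpace (Sk (A := A) k) :=
  TopologicalSpace.induced (fun ρ (a : A) => ρ.1.toSeminorm a) inferInstance

/-- The kernel of a bounded algebra seminorm, as a closed two-sided ideal. -/
def kerOf {k : ℕ} (ρ : Sk (A := A) k) : IdSpace A := by
  refine ⟨{ carrier := {a : A | ρ.1.toSeminorm a = 0}
            zero_mem' := map_zero ρ.1.toSeminorm
            add_mem' := ?_
            smul_mem' := ?_ }, ?_, ?_, ?_⟩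
  · intro a b ha hb
    have ha' : ρ.1.toSeminorm a = 0 := ha
    have hb' : ρ.1.toSeminorm b = 0 := hb
    show ρ.1.toSeminorm (a + b) = 0
    refine le_antisymm ?_ (apply_nonneg _ _)
    calc ρ.1.toSeminorm (a + b) ≤ ρ.1.toSeminorm a + ρ.1.toSeminorm b := map_add_le_add _ _ _
    _ = 0 := by rw [ha', hb', add_zero]
  · intro c a ha
    have ha' : ρ.1.toSeminorm a = 0 := ha
    show ρ.1.toSeminorm (c • a) = 0
    rw [map_smul_eq_mul, ha', mul_zero]
  · have hcont : Continuous fun a : A => ρ.1.toSeminorm a := by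
      rw [Metric.continuous_iff]
      intro b ε hε
      refine ⟨ε / (k + 1), by positivity, fun a hab => ?_⟩
      have h1 : ρ.1.toSeminorm a ≤ ρ.1.toSeminorm (a - b) + ρ.1.toSeminorm b := by
        simpa using map_add_le_add ρ.1.toSeminorm (a - b) b
      have h2 : ρ.1.toSeminorm b ≤ ρ.1.toSeminorm (a - b) + ρ.1.toSeminorm a := by
        have : ρ.1.toSeminorm (b - a) = ρ.1.toSeminorm (a - b) := by
          rw [← neg_sub a b, map_neg_eq_map]
        simpa [this] using map_add_le_add ρ.1.toSeminorm (b - a) a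
      have hbd : ρ.1.toSeminorm (a - b) ≤ k * ‖a - b‖ := ρ.2 _
      have hab' : ‖a - b‖ < ε / (k + 1) := by
        rwa [dist_eq_norm] at hab
      have : ρ.1.toSeminorm (a - b) < ε := by
        calc ρ.1.toSeminorm (a - b) ≤ k * ‖a - b‖ := hbd
        _ ≤ (k + 1) * ‖a - b‖ := by
              have := norm_nonneg (a - b); nlinarith
        _ < (k + 1) * (ε / (k + 1)) := by
              have hk : (0 : ℝ) < k + 1 := by positivity
              exact mul_lt_mul_of_pos_left hab' hk
        _ = ε := by field_simp
      rw [Real.dist_eq]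
      rw [abs_sub_lt_iff]
      constructor <;> linarith
    exact IsClosed.preimage hcont isClosed_singleton
  · intro a b hb
    have hb' : ρ.1.toSeminorm b = 0 := hb
    show ρ.1.toSeminorm (a * b) = 0
    refine le_antisymm ?_ (apply_nonneg _ _)
    calc ρ.1.toSeminorm (a * b) ≤ ρ.1.toSeminorm a * ρ.1.toSeminorm b := ρ.1.mul_le' a b
    _ = 0 := by rw [hb', mul_zero]
  · intro a b ha
    have ha' : ρ.1.toSeminorm a = 0 := ha
    show ρ.1.toSeminorm (a * b) = 0
    refine le_antisymm ?_ (apply_nonneg _ _)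
    calc ρ.1.toSeminorm (a * b) ≤ ρ.1.toSeminorm a * ρ.1.toSeminorm b := ρ.1.mul_le' a b
    _ = 0 := by rw [ha', zero_mul]

variable (A)

/-- `τ_k`: the quotient topology on `Id(A)` induced by the kernel map `κ_k : S_k → Id(A)`. -/
def tauK (k : ℕ) : TopologicalSpace (IdSpace A) :=
  TopologicalSpace.coinduced (kerOf (A := A) (k := k)) inferInstance

/-- `τ_∞`: the intersection of the topologies `τ_k`. -/
def tauInfty : TopologicalSpace (IdSpace A) := ⨆ k : ℕ, tauK A k

end Seminorms
section Synthesis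

variable {A : Type u} [NonUnitalNormedRing A] [NormedSpace ℂ A]

/-- `P` is a primitive ideal: the kernel of an algebraically irreducible representation of `A`
(on a complex vector space). -/
def IsPrimitiveIdl (P : IdSpace A) : Prop :=
  ∃ (M : Type u) (_ : AddCommGroup M) (_ : Module ℂ M)
    (π : A →ₙ+* Module.End ℂ M),
      (∀ (c : ℂ) (a : A), π (c • a) = c • π a) ∧
      (∃ (a : A) (m : M), π a m ≠ 0) ∧
      (∀ S : Submodule ℂ M, (∀ a : A, ∀ m ∈ S, π a m ∈ S) → S = ⊥ ∨ S = ⊤) ∧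
      (∀ a : A, a ∈ P.1 ↔ π a = 0)

/-- `P` is a proper closed prime ideal of `A`. -/
def IsPrimeIdl (P : IdSpace A) : Prop :=
  (P.1 : Set A) ≠ Set.univ ∧
    ∀ I J : IdSpace A, (∀ a ∈ I.1, ∀ b ∈ J.1, a * b ∈ P.1) → (I.1 ≤ P.1 ∨ J.1 ≤ P.1)

/-- A closed ideal is semisimple if it is an intersection of primitive ideals. -/
def IsSemisimpleIdl (I : IdSpace A) : Prop :=
  ∃ T : Set (IdSpace A), (∀ P ∈ T, IsPrimitiveIdl P) ∧
    (I.1 : Set A) = ⋂ P ∈ T, ((P : IdSpace A).1 : Set A)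

variable (A) in
/-- The set of primitive ideals of `A`. -/
def primSet : Set (IdSpace A) := {P | IsPrimitiveIdl P}

variable (A) in
/-- The set of semisimple prime ideals of `A`. -/
def primsSet : Set (IdSpace A) := {P | IsPrimeIdl P ∧ IsSemisimpleIdl P}

/-- The hull-kernel topology on a set of closed ideals of `A`: the coarsest topology in which
all hulls `{P : I ⊆ P}` are closed. -/
def hkTop (S : Set (IdSpace A)) : TopologicalSpace ↥S :=
  TopologicalSpace.generateFrom
    {U | ∃ J : Set A, U = {P : ↥S | ¬ J ⊆ ((P : IdSpace A).1 : Set A)}}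

variable (A) in
/-- The hull-kernel topology `τ_w` has the normality property on `Prim(A)`: whenever a net
`(P_α)` in `Prim(A)` converges to `P` in the hull-kernel topology and `a ∉ P`, then
`liminf ‖a + P_α‖ > 0`. -/
def TauWNormalOnPrim : Prop :=
  ∀ (F : Filter ↥(primSet A)), F.NeBot → ∀ P : ↥(primSet A),
    F ≤ @nhds _ (hkTop (primSet A)) P →
    ∀ a : A, a ∉ (P : IdSpace A).1 →
      0 < Filter.liminf
        (fun Q : ↥(primSet A) => ENNReal.ofReal (qnorm (Q : IdSpace A) a)) F

variable (A) in
/-- Spectral synthesis for a Banach algebra `A`: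
(i) `Prim^s(A)` is locally compact;
(ii) `τ_w` has the normality property on `Prim(A)`;
(iii) every proper closed ideal of `A` is semisimple. -/
def HasSynthesis : Prop :=
  @LocallyCompactSpace _ (hkTop (primsSet A)) ∧
  TauWNormalOnPrim A ∧
  ∀ I : IdSpace A, (I.1 : Set A) ≠ Set.univ → IsSemisimpleIdl I

end Synthesis

section ProofAux

variable {A : Type u} [NonUnitalNormedRing A] [NormedSpace ℂ A]

lemma idspace_nonempty (I : IdSpace A) : ((I.1 : Set A)).Nonempty := ⟨0, I.1.zero_mem⟩

lemma qnorm_anti {I J : IdSpace A} (h : (I.1 : Set A) ⊆ (J.1 : Set A)) (a : A) :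
    qnorm J a ≤ qnorm I a :=
  Metric.infDist_le_infDist_of_subset h (idspace_nonempty I)

lemma qnorm_pos {I : IdSpace A} {a : A} (h : a ∉ I.1) : 0 < qnorm I a :=
  (I.2.1.notMem_iff_infDist_pos (idspace_nonempty I)).1 h

lemma le_iff_subset {I J : IdSpace A} : I ≤ J ↔ (I.1 : Set A) ⊆ (J.1 : Set A) := by
  constructor
  · intro h x hx; exact h hx
  · intro h x hx; exact h hx

/-- Tendsto in `tauN` given the normality property for all tail-restricted filters. -/
lemma tendsto_tauN {ι : Type v} [Preorder ι] {Iₐ : ι → IdSpace A} {I : IdSpace A}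
    (hnorm : ∀ F : Filter (IdSpace A), F.NeBot → F ≤ Filter.map Iₐ Filter.atTop →
      NormalityProp F I) :
    Filter.Tendsto Iₐ Filter.atTop (@nhds _ (tauN A) I) := by
  rw [tauN, TopologicalSpace.tendsto_nhds_generateFrom_iff]
  intro U hU hIU
  by_contra hne
  have hfreq : ∃ᶠ α in Filter.atTop, Iₐ α ∉ U := by
    intro h
    exact hne (h.mono fun α hα => not_not.1 hα)
  set F : Filter (IdSpace A) := Filter.map Iₐ Filter.atTop ⊓ Filter.principal Uᶜ with hF
  have hFne : F.NeBot := by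
    rw [hF, Filter.inf_principal_neBot_iff]
    intro V hV
    rcases (((Filter.frequently_map (m := Iₐ) (P := fun J => J ∉ U)).2 hfreq).and_eventually hV).exists with ⟨J, h1, h2⟩
    exact ⟨J, h2, h1⟩
  have := hU F hFne (inf_le_right.trans_eq rfl) I
    (hnorm F hFne inf_le_left)
  exact this hIU

end ProofAux

/-- **Lemma 1.1.** Let `A` be a Banach algebra. If `(I_α)` is a decreasing net in `Id(A)` and
`I = ⋂ I_α`, then `I_α → I` in `τ_r`; likewise, if `(I_α)` is an increasing net and
`I = closure (⋃ I_α)`, then `I_α → I` in `τ_r`. -/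
theorem stmt_0 (A : Type u) [NonUnitalNormedRing A] [NormedSpace ℂ A]
    [IsScalarTower ℂ A A] [SMulCommClass ℂ A A] [CompleteSpace A] :
    (∀ (ι : Type v) (_ : Preorder ι) (_ : IsDirected ι (· ≤ ·)) (_ : Nonempty ι)
      (Iₐ : ι → IdSpace A) (I : IdSpace A), Antitone Iₐ →
        (I.1 : Set A) = ⋂ α, ((Iₐ α).1 : Set A) →
        Filter.Tendsto Iₐ Filter.atTop (@nhds _ (tauR A) I)) ∧
    (∀ (ι : Type v) (_ : Preorder ι) (_ : IsDirected ι (· ≤ ·)) (_ : Nonempty ι)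
      (Iₐ : ι → IdSpace A) (I : IdSpace A), Monotone Iₐ →
        (I.1 : Set A) = closure (⋃ α, ((Iₐ α).1 : Set A)) →
        Filter.Tendsto Iₐ Filter.atTop (@nhds _ (tauR A) I)) := by
  constructor
  · -- decreasing case
    intro ι ipre idir inem Iₐ I hanti hI
    haveI := idir; haveI := inem
    have hsub : ∀ α, (I.1 : Set A) ⊆ ((Iₐ α).1 : Set A) := by
      intro α; rw [hI]; exact Set.iInter_subset _ α
    rw [tauR, _root_.nhds_inf, Filter.tendsto_inf]
    constructor
    · rw [tauU, TopologicalSpace.tendsto_nhds_generateFrom_iff]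
      rintro U ⟨a, r, rfl⟩ hIU
      exact Filter.univ_mem' fun α => lt_of_le_of_lt (qnorm_anti (hsub α) a) hIU
    · apply tendsto_tauN
      intro F hFne hFle a ha
      have ha' : a ∉ ⋂ α, ((Iₐ α).1 : Set A) := by rw [← hI]; exact ha
      rw [Set.mem_iInter] at ha'
      push_neg at ha'
      obtain ⟨α₀, hα₀⟩ := ha'
      have hpos : 0 < qnorm (Iₐ α₀) a := qnorm_pos hα₀
      refine lt_of_lt_of_le (ENNReal.ofReal_pos.2 hpos) ?_
      have hev : ∀ᶠ J in Filter.map Iₐ Filter.atTop,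
          ENNReal.ofReal (qnorm (Iₐ α₀) a) ≤ ENNReal.ofReal (qnorm J a) := by
        rw [Filter.eventually_map]
        filter_upwards [Filter.eventually_ge_atTop α₀] with α hα
        exact ENNReal.ofReal_le_ofReal (qnorm_anti (_root_.le_iff_subset.1 (hanti hα)) a)
      exact Filter.le_liminf_of_le (by isBoundedDefault) (hFle hev)
  · -- increasing case
    intro ι ipre idir inem Iₐ I hmono hI
    haveI := idir; haveI := inem
    have hUne : (⋃ α, ((Iₐ α).1 : Set A)).Nonempty :=
      ⟨0, Set.mem_iUnion.2 ⟨Classical.arbitrary ι, (Iₐ _).1.zero_mem⟩⟩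
    have hqI : ∀ a : A, qnorm I a = Metric.infDist a (⋃ α, ((Iₐ α).1 : Set A)) := by
      intro a; rw [qnorm, hI, Metric.infDist_closure]
    have hsub : ∀ α, ((Iₐ α).1 : Set A) ⊆ ⋃ β, ((Iₐ β).1 : Set A) := fun α =>
      Set.subset_iUnion (fun β => ((Iₐ β).1 : Set A)) α
    rw [tauR, _root_.nhds_inf, Filter.tendsto_inf]
    constructor
    · rw [tauU, TopologicalSpace.tendsto_nhds_generateFrom_iff]
      rintro U ⟨a, r, rfl⟩ hIU
      have hIU' : Metric.infDist a (⋃ α, ((Iₐ α).1 : Set A)) < r := by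
        rw [← hqI]; exact hIU
      obtain ⟨y, hy, hdy⟩ := (Metric.infDist_lt_iff hUne).1 hIU'
      obtain ⟨α₀, hyα₀⟩ := Set.mem_iUnion.1 hy
      refine Filter.mem_of_superset (Filter.eventually_ge_atTop α₀) fun α hα => ?_
      have hyα : y ∈ ((Iₐ α).1 : Set A) := _root_.le_iff_subset.1 (hmono hα) hyα₀
      exact lt_of_le_of_lt (Metric.infDist_le_dist_of_mem hyα) hdy
    · apply tendsto_tauN
      intro F hFne hFle a ha
      have hpos : 0 < Metric.infDist a (⋃ α, ((Iₐ α).1 : Set A)) := by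
        rw [← hqI]
        exact qnorm_pos ha
      refine lt_of_lt_of_le (ENNReal.ofReal_pos.2 hpos) ?_
      have hev : ∀ᶠ J in Filter.map Iₐ Filter.atTop,
          ENNReal.ofReal (Metric.infDist a (⋃ α, ((Iₐ α).1 : Set A)))
            ≤ ENNReal.ofReal (qnorm J a) := by
        rw [Filter.eventually_map]
        filter_upwards with α
        exact ENNReal.ofReal_le_ofReal
          (Metric.infDist_le_infDist_of_subset (hsub α) (idspace_nonempty (Iₐ α)))
      exact Filter.le_liminf_of_le (by isBoundedDefault) (hFle hev)
end
end

section
/- Let q be a prime and let N be a second countable, uncountable, locally compact abelian group in which every non-trivial element has order q. Then for every non-empty open subset U of N there exists an increasing sequence (F_k) of finite independent subsets of U such that ⋃_k F_k is dense in U. -/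
open Topology Filter Set Pointwise

noncomputable section

universe u v

section Groups

/-- A subset `E` of an (additively written) abelian group is *independent* if for all distinct
`x₁, …, x_k ∈ E` and integers `n₁, …, n_k`, either `n₁x₁ = n₂x₂ = ⋯ = n_kx_k = 0` or
`n₁x₁ + ⋯ + n_kx_k ≠ 0`. -/
def IsIndependentSet {N : Type u} [AddCommGroup N] (E : Set N) : Prop :=
  ∀ (k : ℕ) (x : Fin k → N), Function.Injective x → (∀ i, x i ∈ E) →
    ∀ n : Fin k → ℤ, (∀ i, n i • x i = 0) ∨ (∑ i, n i • x i ≠ 0)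

/-- A locally compact abelian group is an I-group if every neighbourhood of the identity
contains an element of infinite order (additive version). -/
def IsIGroup (N : Type u) [AddGroup N] [TopologicalSpace N] : Prop :=
  ∀ U ∈ nhds (0 : N), ∃ x ∈ U, ¬ IsOfFinAddOrder x

/-- A locally compact abelian group is an I-group if every neighbourhood of the identity
contains an element of infinite order (multiplicative version). -/
def IsMulIGroup (H : Type u) [Monoid H] [TopologicalSpace H] : Prop :=
  ∀ U ∈ nhds (1 : H), ∃ x ∈ U, ¬ IsOfFinOrder x

end Groups

/-- **Lemma 3.3** (torsion case). Let `q` be a prime and let `N` be a second countable,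
uncountable, locally compact abelian group in which every non-trivial element has order `q`.
Then every non-empty open subset `U` of `N` contains an increasing sequence `(F_k)` of finite
independent subsets whose union is dense in `U`. -/
theorem stmt_12 (q : ℕ) (hq : q.Prime)
    (N : Type u) [AddCommGroup N] [TopologicalSpace N] [IsTopologicalAddGroup N]
    [LocallyCompactSpace N] [SecondCountableTopology N]
    (hunc : ¬ Countable N)
    (horder : ∀ x : N, x ≠ 0 → addOrderOf x = q)
    (U : Set N) (hU : IsOpen U) (hne : U.Nonempty) :
    ∃ F : ℕ → Set N, Monotone F ∧
      (∀ k, F k ⊆ U ∧ (F k).Finite ∧ IsIndependentSet (F k)) ∧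
      U ⊆ closure (⋃ k, F k) := by
  classical
  haveI : Fact q.Prime := ⟨hq⟩
  have hqsmul : ∀ x : N, q • x = 0 := by
    intro x
    rcases eq_or_ne x 0 with rfl | hx
    · simp
    · rw [← horder x hx]; exact addOrderOf_nsmul_eq_zero x
  haveI : Module (ZMod q) N := AddCommGroup.zmodModule hqsmul
  -- every nonempty open set is uncountable
  have huncount : ∀ V : Set N, IsOpen V → V.Nonempty → ¬ V.Countable := by
    rintro V hVo ⟨v0, hv0⟩ hVc
    apply hunc
    obtain ⟨t, htc, heq⟩ := TopologicalSpace.isOpen_iUnion_countable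
      (fun g : N => g +ᵥ V) (fun g => hVo.vadd g)
    have huniv : (Set.univ : Set N) = ⋃ g ∈ t, g +ᵥ V := by
      rw [heq]
      refine (Set.eq_univ_of_forall ?_).symm
      intro x
      exact Set.mem_iUnion.2 ⟨x - v0, ⟨v0, hv0, by simp only [vadd_eq_add]; abel⟩⟩
    have : (Set.univ : Set N).Countable := by
      rw [huniv]
      exact htc.biUnion (fun g _ => (hVc.image _))
    exact Set.countable_univ_iff.mp this
  -- extension step
  have step : ∀ F : Set N, F.Finite → ∀ V : Set N, IsOpen V → V.Nonempty →
      ∃ x ∈ V, x ∉ Submodule.span (ZMod q) F := by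
    intro F hF V hVo hVne
    by_contra h
    push_neg at h
    haveI := FiniteDimensional.span_of_finite (ZMod q) hF
    haveI : Finite ↥(Submodule.span (ZMod q) F) := Module.finite_of_finite (ZMod q)
    have hcnt : (Submodule.span (ZMod q) F : Set N).Countable :=
      (Submodule.span (ZMod q) F : Set N).toFinite.countable
    exact huncount V hVo hVne (hcnt.mono h)
  -- linear independence implies IsIndependentSet
  have indep_of_li : ∀ F : Set N, LinearIndependent (ZMod q) (fun b => b : F → N) →
      IsIndependentSet F := by
    intro F hli k x hinj hmem n
    by_cases hs : ∑ i, n i • x i = 0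
    · left
      have hli' : LinearIndependent (ZMod q) x := by
        have := hli.comp (fun i => (⟨x i, hmem i⟩ : F))
          (fun i j h => hinj (congrArg Subtype.val h))
        exact this
      have h0 : ∑ i, ((n i : ZMod q)) • x i = 0 := by
        rw [← hs]
        exact Finset.sum_congr rfl fun i _ => Int.cast_smul_eq_zsmul _ _ _
      have hz := linearIndependent_iff'.mp hli' Finset.univ
        (fun i => ((n i : ZMod q))) h0
      intro i
      have hdvd : (q : ℤ) ∣ n i :=
        (ZMod.intCast_zmod_eq_zero_iff_dvd _ _).mp (hz i (Finset.mem_univ i))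
      obtain ⟨m, hm⟩ := hdvd
      rw [hm, mul_smul, natCast_zsmul, hqsmul]
    · exact Or.inr hs
  -- enumerate basic open subsets of U
  obtain ⟨B, hBc, -, hBbasis⟩ := TopologicalSpace.exists_countable_basis N
  set T : Set (Set N) := {b ∈ B | (b ∩ U).Nonempty} with hT
  have hTc : T.Countable := hBc.mono (Set.sep_subset _ _)
  have hTne : T.Nonempty := by
    obtain ⟨x, hx⟩ := hne
    obtain ⟨b, hbB, hxb, hbU⟩ := hBbasis.exists_subset_of_mem_open hx hU
    exact ⟨b, hbB, x, hxb, hx⟩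
  obtain ⟨Ve, hVe⟩ := hTc.exists_eq_range hTne
  have hVeT : ∀ k, Ve k ∈ T := fun k => hVe ▸ Set.mem_range_self k
  set Vk : ℕ → Set N := fun k => Ve k ∩ U with hVk
  have hVko : ∀ k, IsOpen (Vk k) := fun k => (hBbasis.isOpen (hVeT k).1).inter hU
  have hVkne : ∀ k, (Vk k).Nonempty := fun k => (hVeT k).2
  -- the invariant
  set P : Set N → Prop := fun F => F.Finite ∧ F ⊆ U ∧
    LinearIndependent (ZMod q) (fun b => b : F → N) with hP
  have step' : ∀ F : Set N, P F → ∀ k : ℕ, ∃ x, x ∈ Vk k ∧ P (insert x F) := by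
    rintro F ⟨hFfin, hFU, hFli⟩ k
    obtain ⟨x, hxV, hxspan⟩ := step F hFfin (Vk k) (hVko k) (hVkne k)
    exact ⟨x, hxV, hFfin.insert x, Set.insert_subset hxV.2 hFU, LinearIndepOn.id_insert hFli hxspan⟩
  have hPempty : P ∅ := ⟨Set.finite_empty, Set.empty_subset _, linearIndependent_empty _ _⟩
  -- recursion
  let G : ℕ → {F : Set N // P F} := fun k =>
    Nat.rec ⟨∅, hPempty⟩
      (fun k ih => ⟨insert (Classical.choose (step' ih.1 ih.2 k)) ih.1,
        (Classical.choose_spec (step' ih.1 ih.2 k)).2⟩) k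
  have hGsucc : ∀ k, (G (k+1)).1 = insert (Classical.choose (step' (G k).1 (G k).2 k)) (G k).1 :=
    fun k => rfl
  have hGmem : ∀ k, Classical.choose (step' (G k).1 (G k).2 k) ∈ Vk k :=
    fun k => (Classical.choose_spec (step' (G k).1 (G k).2 k)).1
  refine ⟨fun k => (G k).1, ?_, ?_, ?_⟩
  · apply monotone_nat_of_le_succ
    intro k
    rw [hGsucc k]
    exact Set.subset_insert _ _
  · intro k
    exact ⟨(G k).2.2.1, (G k).2.1, indep_of_li _ (G k).2.2.2⟩
  · intro x hx
    rw [mem_closure_iff]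
    intro W hWo hxW
    obtain ⟨b, hbB, hxb, hbW⟩ := hBbasis.exists_subset_of_mem_open hxW hWo
    have hbT : b ∈ T := ⟨hbB, x, hxb, hx⟩
    rw [hVe] at hbT
    obtain ⟨n, hn⟩ := hbT
    refine ⟨Classical.choose (step' (G n).1 (G n).2 n), ?_, ?_⟩
    · exact hbW (hn ▸ (hGmem n).1)
    · exact Set.mem_iUnion.2 ⟨n + 1, by rw [hGsucc n]; exact Set.mem_insert _ _⟩
end
end
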